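/- Every two-dimensional commutative unital associative real algebra is isomorphic as an ℝ-algebra to exactly one of: ℂ (complex numbers), ℝ × ℝ (double numbers), or ℝ[ε] (dual numbers). -/
import Mathlib

open Module

private lemma expand_sq {C : Type} [CommRing C] [Algebra ℝ C] (a b c d t : ℝ) (z : C)
    (hz : z * z = t • 1) :
    (a • z + b • 1) * (c • z + d • 1) = (a * d + b * c) • z + (a * c * t + b * d) • (1 : C) := by
  have h : (a • z + b • 1) * (c • z + d • 1)
      = (a * c) • (z * z) + ((a * d + b * c) • z + (b * d) • (1 : C)) := by
    simp only [mul_add, add_mul, smul_mul_smul_comm, mul_one, one_mul]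
    module
  rw [h, hz, smul_smul]
  module

private lemma alg_equiv_of_sq {A B : Type} [CommRing A] [Algebra ℝ A] [CommRing B] [Algebra ℝ B]
    (hA : Module.finrank ℝ A = 2) (hB : Module.finrank ℝ B = 2) (t : ℝ) (x : A) (u : B)
    (hx : x * x = t • 1) (hu : u * u = t • 1)
    (hxi : LinearIndependent ℝ ![x, 1]) (hui : LinearIndependent ℝ ![u, 1]) :
    Nonempty (A ≃ₐ[ℝ] B) := by
  have cardA : Fintype.card (Fin 2) = finrank ℝ A := by simp [hA]
  have cardB : Fintype.card (Fin 2) = finrank ℝ B := by simp [hB]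
  let BA := basisOfLinearIndependentOfCardEqFinrank hxi cardA
  let BB := basisOfLinearIndependentOfCardEqFinrank hui cardB
  have hBA : ⇑BA = ![x, 1] := coe_basisOfLinearIndependentOfCardEqFinrank _ _
  have hBB : ⇑BB = ![u, 1] := coe_basisOfLinearIndependentOfCardEqFinrank _ _
  let e := BA.equiv BB (Equiv.refl _)
  have he0 : e x = u := by
    have h := BA.equiv_apply (0 : Fin 2) BB (Equiv.refl _)
    simpa [hBA, hBB] using h
  have he1 : e 1 = 1 := by
    have h := BA.equiv_apply (1 : Fin 2) BB (Equiv.refl _)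
    simpa [hBA, hBB] using h
  have hrep : ∀ p : A, ∃ a b : ℝ, p = a • x + b • 1 := by
    intro p
    refine ⟨BA.repr p 0, BA.repr p 1, ?_⟩
    conv_lhs => rw [← BA.sum_repr p]
    rw [Fin.sum_univ_two]
    simp only [hBA, Matrix.cons_val_zero, Matrix.cons_val_one, Matrix.head_cons]
  refine ⟨AlgEquiv.ofLinearEquiv e he1 ?_⟩
  intro p q
  obtain ⟨a, b, rfl⟩ := hrep p
  obtain ⟨c, d, rfl⟩ := hrep q
  rw [expand_sq a b c d t x hx]
  simp only [map_add, map_smul, he0, he1]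
  rw [expand_sq a b c d t u hu]

private lemma indep_of_not_smul {A : Type} [CommRing A] [Algebra ℝ A] [Nontrivial A]
    {z : A} (h : ∀ a : ℝ, a • (1 : A) ≠ z) : LinearIndependent ℝ ![z, 1] := by
  rw [linearIndependent_fin2]
  refine ⟨by simp, fun a => by simpa using h a⟩

private lemma indep_I : LinearIndependent ℝ ![Complex.I, 1] := by
  apply indep_of_not_smul
  intro a h
  have := congrArg Complex.im h
  simp at this

private lemma indep_pair : LinearIndependent ℝ ![((1, -1) : ℝ × ℝ), 1] := by
  apply indep_of_not_smul
  intro a h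
  have h1 := congrArg Prod.fst h
  have h2 := congrArg Prod.snd h
  simp [Prod.ext_iff] at h1 h2
  linarith

private lemma indep_eps : LinearIndependent ℝ ![(DualNumber.eps : DualNumber ℝ), 1] := by
  apply indep_of_not_smul
  intro a h
  have h' := congrArg TrivSqZeroExt.snd h
  rw [TrivSqZeroExt.snd_smul, TrivSqZeroExt.snd_one, DualNumber.snd_eps, smul_zero] at h'
  exact zero_ne_one h'

theorem two_dim_real_comm_algebra_classification (A : Type) [CommRing A] [Algebra ℝ A]
    (h2 : Module.finrank ℝ A = 2) :
    (Nonempty (A ≃ₐ[ℝ] ℂ) ∨ Nonempty (A ≃ₐ[ℝ] (ℝ × ℝ)) ∨ Nonempty (A ≃ₐ[ℝ] DualNumber ℝ)) ∧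
    ¬ (Nonempty (A ≃ₐ[ℝ] ℂ) ∧ Nonempty (A ≃ₐ[ℝ] (ℝ × ℝ))) ∧
    ¬ (Nonempty (A ≃ₐ[ℝ] ℂ) ∧ Nonempty (A ≃ₐ[ℝ] DualNumber ℝ)) ∧
    ¬ (Nonempty (A ≃ₐ[ℝ] (ℝ × ℝ)) ∧ Nonempty (A ≃ₐ[ℝ] DualNumber ℝ)) := by
  have hfd : FiniteDimensional ℝ A := FiniteDimensional.of_finrank_pos (by omega)
  have hnt : Nontrivial A := Module.nontrivial_of_finrank_pos (R := ℝ) (by omega)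
  have hC : finrank ℝ ℂ = 2 := Complex.finrank_real_complex
  have hP : finrank ℝ (ℝ × ℝ) = 2 := by simp
  have hD : finrank ℝ (DualNumber ℝ) = 2 := by
    rw [show Module.finrank ℝ (DualNumber ℝ) = Module.finrank ℝ (ℝ × ℝ) from rfl]
    simp
  refine ⟨?_, ?_, ?_, ?_⟩
  · -- existence
    have hw : ∃ w : A, ∀ a : ℝ, a • (1 : A) ≠ w := by
      by_contra hcon
      push_neg at hcon
      have hsp : Submodule.span ℝ {(1 : A)} = ⊤ := by
        rw [Submodule.eq_top_iff']
        intro w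
        exact Submodule.mem_span_singleton.mpr (hcon w)
      have h1 : finrank ℝ (Submodule.span ℝ {(1 : A)}) = 1 :=
        finrank_span_singleton one_ne_zero
      rw [hsp, finrank_top] at h1
      omega
    obtain ⟨w, hw⟩ := hw
    have hwi : LinearIndependent ℝ ![w, 1] := indep_of_not_smul hw
    have hww : ∃ a b : ℝ, w * w = b • w + a • 1 := by
      have card : Fintype.card (Fin 2) = finrank ℝ A := by simp [h2]
      let Bw := basisOfLinearIndependentOfCardEqFinrank hwi card
      have hBw : ⇑Bw = ![w, 1] := coe_basisOfLinearIndependentOfCardEqFinrank _ _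
      refine ⟨Bw.repr (w * w) 1, Bw.repr (w * w) 0, ?_⟩
      conv_lhs => rw [← Bw.sum_repr (w * w)]
      rw [Fin.sum_univ_two]
      simp only [hBw, Matrix.cons_val_zero, Matrix.cons_val_one, Matrix.head_cons]
    obtain ⟨a, b, hww⟩ := hww
    set z : A := w - (b / 2) • 1 with hz_def
    have hzw : ∀ c : ℝ, c • (1 : A) ≠ z := by
      intro c hc
      apply hw (c + b / 2)
      have h' : (c + b / 2) • (1 : A) = c • (1 : A) + (b / 2) • 1 := by module
      rw [h', hc]
      module
    set c0 : ℝ := a + b ^ 2 / 4 with hc0_def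
    have hzz : z * z = c0 • 1 := by
      have h : z * z = w * w - b • w + (b / 2 * (b / 2)) • 1 := by
        rw [hz_def]
        have : (w - (b / 2) • 1) * (w - (b / 2) • 1)
            = w * w - (b / 2) • ((1:A) * w) - (b / 2) • (w * 1) + (b / 2 * (b / 2)) • ((1:A) * 1) := by
          simp only [sub_mul, mul_sub, smul_mul_smul_comm, smul_mul_assoc, mul_smul_comm]
          module
        rw [this, one_mul, mul_one, mul_one]
        module
      rw [h, hww, hc0_def]
      module
    -- scaling helper
    have hscale_sq : ∀ r : ℝ, (r • z) * (r • z) = (r * r * c0) • 1 := by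
      intro r
      rw [smul_mul_smul_comm, hzz, smul_smul]
    have hscale_ind : ∀ r : ℝ, r ≠ 0 → LinearIndependent ℝ ![r • z, 1] := by
      intro r hr
      apply indep_of_not_smul
      intro d hd
      apply hzw (r⁻¹ * d)
      have := congrArg (fun v => r⁻¹ • v) hd
      simpa [smul_smul, inv_mul_cancel₀ hr] using this
    rcases lt_trichotomy c0 0 with hc | hc | hc
    · -- complex case
      set r : ℝ := (Real.sqrt (-c0))⁻¹ with hr_def
      have hs : Real.sqrt (-c0) ≠ 0 := Real.sqrt_ne_zero'.mpr (by linarith)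
      have hrr : r * r * c0 = -1 := by
        rw [hr_def, ← mul_inv, Real.mul_self_sqrt (by linarith)]
        have : c0 ≠ 0 := ne_of_lt hc
        field_simp
      refine Or.inl (alg_equiv_of_sq h2 hC (-1) (r • z) Complex.I ?_ (by simp) ?_ indep_I)
      · rw [hscale_sq, hrr]
      · exact hscale_ind r (by simp [hr_def, hs])
    · -- dual case
      refine Or.inr (Or.inr (alg_equiv_of_sq h2 hD 0 z DualNumber.eps ?_ ?_ (indep_of_not_smul hzw) indep_eps))
      · rw [hzz, hc]
      · rw [DualNumber.eps_mul_eps]; simp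
    · -- split case
      set r : ℝ := (Real.sqrt c0)⁻¹ with hr_def
      have hs : Real.sqrt c0 ≠ 0 := Real.sqrt_ne_zero'.mpr (by linarith)
      have hrr : r * r * c0 = 1 := by
        rw [hr_def, ← mul_inv, Real.mul_self_sqrt (by linarith)]
        have : c0 ≠ 0 := ne_of_gt hc
        field_simp
      refine Or.inr (Or.inl (alg_equiv_of_sq h2 hP 1 (r • z) ((1, -1) : ℝ × ℝ) ?_ ?_ ?_ indep_pair))
      · rw [hscale_sq, hrr]
      · norm_num [Prod.ext_iff]
      · exact hscale_ind r (by simp [hr_def, hs])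
  · rintro ⟨⟨e⟩, ⟨f⟩⟩
    let g : (ℝ × ℝ) ≃ₐ[ℝ] ℂ := f.symm.trans e
    have h0 : g (1, 0) * g (0, 1) = 0 := by
      rw [← map_mul, show ((1, 0) : ℝ × ℝ) * (0, 1) = 0 by norm_num [Prod.ext_iff], map_zero]
    rcases mul_eq_zero.mp h0 with h | h
    · have h' := g.injective (h.trans (map_zero g).symm)
      exact one_ne_zero (congrArg Prod.fst h')
    · have h' := g.injective (h.trans (map_zero g).symm)
      exact one_ne_zero (congrArg Prod.snd h')
  · rintro ⟨⟨e⟩, ⟨f⟩⟩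
    let g : DualNumber ℝ ≃ₐ[ℝ] ℂ := f.symm.trans e
    have h0 : g DualNumber.eps * g DualNumber.eps = 0 := by
      rw [← map_mul, DualNumber.eps_mul_eps, map_zero]
    have h1 : g DualNumber.eps = 0 := mul_self_eq_zero.mp h0
    have h2' := g.injective (h1.trans (map_zero g).symm)
    have h3 := congrArg TrivSqZeroExt.snd h2'
    rw [DualNumber.snd_eps, TrivSqZeroExt.snd_zero] at h3
    exact one_ne_zero h3
  · rintro ⟨⟨e⟩, ⟨f⟩⟩
    let g : DualNumber ℝ ≃ₐ[ℝ] (ℝ × ℝ) := f.symm.trans e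
    have h0 : g DualNumber.eps * g DualNumber.eps = 0 := by
      rw [← map_mul, DualNumber.eps_mul_eps, map_zero]
    have h1 : (g DualNumber.eps).1 * (g DualNumber.eps).1 = 0 := congrArg Prod.fst h0
    have h2' : (g DualNumber.eps).2 * (g DualNumber.eps).2 = 0 := congrArg Prod.snd h0
    have h3 : g DualNumber.eps = 0 :=
      Prod.ext (mul_self_eq_zero.mp h1) (mul_self_eq_zero.mp h2')
    have h4 := g.injective (h3.trans (map_zero g).symm)
    have h5 := congrArg TrivSqZeroExt.snd h4
    rw [DualNumber.snd_eps, TrivSqZeroExt.snd_zero] at h5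
    exact one_ne_zero h5
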